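/- Let k ≥ 1, J a dyadic interval, and Ξ_J⁺ = {I_i⁺ : 0 ≤ i < 2k} the right halves of the non-minimal intervals in the chain Ξ_J. Then the sets in Ξ_J⁺ are pairwise disjoint and, together with [jp(J), rep(I(J))), they partition the support [jp(J), rep(J)) of μ_J^λ. -/

import Mathlib

open MeasureTheory Set

/-- The dyadic interval `[2^k m, 2^k (m+1))`. -/
noncomputable def dyadicI (k m : ℤ) : Set ℝ := Set.Ico ((2:ℝ)^k * m) ((2:ℝ)^k * (m+1))

/-- The "jumping point" of the dyadic interval `J = [2^n p, 2^n (p+1))`. -/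
noncomputable def jp (n p : ℤ) : ℝ := (2:ℝ)^n * p + (2:ℝ)^n / 3

/-- The right endpoint of the dyadic interval `J = [2^n p, 2^n (p+1))`. -/
noncomputable def rep (n p : ℤ) : ℝ := (2:ℝ)^n * (p + 1)

lemma vol_dyadicI (a b : ℤ) : volume (dyadicI a b) = ENNReal.ofReal ((2:ℝ)^a) := by
  rw [dyadicI, Real.volume_Ico]
  congr 1
  push_cast
  ring

/-- If `jp n p` lies in the left half of the dyadic interval `dyadicI a b` with `a ≤ n`,
then `jp n p` is exactly one third of the way through that interval. -/
lemma jp_offset {n p a b : ℤ} (ha : a ≤ n) (h : jp n p ∈ dyadicI (a-1) (2*b)) :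
    (2:ℝ)^a * b = jp n p - (2:ℝ)^a / 3 := by
  obtain ⟨h1, h2⟩ := h
  set m : ℕ := (n - a).toNat with hm
  have hnm : (2:ℝ)^n = (2:ℝ)^a * (2:ℝ)^(m:ℕ) := by
    rw [← zpow_natCast (2:ℝ) m, ← zpow_add₀ (two_ne_zero), hm,
      Int.toNat_of_nonneg (by omega)]
    ring_nf
  have hpa : (0:ℝ) < (2:ℝ)^a := by positivity
  have he : (2:ℝ)^(a-1) = (2:ℝ)^a / 2 := by
    rw [zpow_sub₀ (two_ne_zero), zpow_one]
  rw [jp, he] at h1 h2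
  push_cast at h1 h2
  rw [hnm] at h1 h2
  set d : ℤ := 2^m * p - b with hd
  set N : ℤ := 3 * d + 2^m with hN
  have hNr : (N:ℝ) = 3 * ((2:ℝ)^(m:ℕ) * p - b) + (2:ℝ)^(m:ℕ) := by
    push_cast [hN, hd]; ring
  have k1 : (b:ℝ) ≤ (2:ℝ)^(m:ℕ) * p + (2:ℝ)^(m:ℕ)/3 := by
    have h1' : (2:ℝ)^a * b ≤ (2:ℝ)^a * ((2:ℝ)^(m:ℕ) * p + (2:ℝ)^(m:ℕ)/3) := by linarith
    exact (mul_le_mul_iff_right₀ hpa).mp h1'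
  have k2 : (2:ℝ)^(m:ℕ) * p + (2:ℝ)^(m:ℕ)/3 < (b:ℝ) + 1/2 := by
    have h2' : (2:ℝ)^a * ((2:ℝ)^(m:ℕ) * p + (2:ℝ)^(m:ℕ)/3) < (2:ℝ)^a * ((b:ℝ) + 1/2) := by
      linarith
    exact (mul_lt_mul_iff_right₀ hpa).mp h2'
  have hN0 : 0 ≤ N := by
    have : (0:ℝ) ≤ (N:ℝ) := by rw [hNr]; linarith
    exact_mod_cast this
  have hN2 : N < 2 := by
    have : (N:ℝ) < 2 := by rw [hNr]; linarith
    exact_mod_cast this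
  have hNne : N ≠ 0 := by
    intro h0
    have h3 : (3:ℤ) ∣ 2^m := ⟨-d, by omega⟩
    have hp3 : Prime (3:ℤ) := by norm_num
    have := hp3.dvd_of_dvd_pow h3
    norm_num at this
  have hN1 : N = 1 := by omega
  have hdr : (3:ℝ) * ((2:ℝ)^(m:ℕ) * p - b) = 1 - (2:ℝ)^(m:ℕ) := by
    have : (N:ℝ) = 1 := by exact_mod_cast congrArg (Int.cast : ℤ → ℝ) hN1
    rw [hNr] at this
    linarith
  rw [jp, hnm]
  linear_combination (-(2:ℝ)^a/3) * hdr

lemma union_chain (g : ℕ → ℝ) (cc : ℝ) (hg : ∀ j, g j ≤ g (j+1)) (hc : cc ≤ g 0) (N : ℕ) :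
    (Ico cc (g 0) ∪ ⋃ j < N, Ico (g j) (g (j+1))) = Ico cc (g N) := by
  have hmono : Monotone g := monotone_nat_of_le_succ hg
  induction N with
  | zero => simp
  | succ N ih =>
    rw [Set.biUnion_lt_succ, ← union_assoc, ih,
      Ico_union_Ico_eq_Ico (le_trans hc (hmono (Nat.zero_le N))) (hg N)]

/-- The sets of `Ξ_J⁺` (the right halves of the non-minimal chain intervals; the right
half of `dyadicI a b` is `dyadicI (a-1) (2b+1)`) are pairwise disjoint and, together with
`[jp(J), rep(I(J)))`, partition the support `[jp(J), rep(J))` of `μ_J^λ`. -/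
theorem stmt7 (k : ℕ) (hk : 1 ≤ k) (n p : ℤ)
    (c : Fin (2*k+1) → ℤ × ℤ)
    (h0 : c 0 = (n, p))
    (hjp : ∀ i, jp n p ∈ dyadicI ((c i).1 - 1) (2 * (c i).2))
    (hnest : ∀ i : Fin (2*k),
      dyadicI (c i.succ).1 (c i.succ).2 ⊆ dyadicI (c i.castSucc).1 (c i.castSucc).2)
    (hlen : ∀ i : Fin (2*k),
      volume (dyadicI (c i.castSucc).1 (c i.castSucc).2)
        = 4 * volume (dyadicI (c i.succ).1 (c i.succ).2)) :
    (∀ i j : Fin (2*k), i ≠ j →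
      Disjoint (dyadicI ((c i.castSucc).1 - 1) (2 * (c i.castSucc).2 + 1))
               (dyadicI ((c j.castSucc).1 - 1) (2 * (c j.castSucc).2 + 1))) ∧
    (∀ i : Fin (2*k),
      Disjoint (Set.Ico (jp n p) (rep (c (Fin.last (2*k))).1 (c (Fin.last (2*k))).2))
               (dyadicI ((c i.castSucc).1 - 1) (2 * (c i.castSucc).2 + 1))) ∧
    (Set.Ico (jp n p) (rep (c (Fin.last (2*k))).1 (c (Fin.last (2*k))).2)
        ∪ ⋃ i : Fin (2*k), dyadicI ((c i.castSucc).1 - 1) (2 * (c i.castSucc).2 + 1))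
      = Set.Ico (jp n p) (rep n p) := by
  -- Step 1: the scales drop by 2 at each step
  have hstep : ∀ i : Fin (2*k), (c i.succ).1 = (c i.castSucc).1 - 2 := by
    intro i
    have h := hlen i
    rw [vol_dyadicI, vol_dyadicI] at h
    have h4 : (4:ENNReal) = ENNReal.ofReal 4 := by norm_num
    rw [h4, ← ENNReal.ofReal_mul (by norm_num)] at h
    have hr : (2:ℝ)^((c i.castSucc).1) = 4 * (2:ℝ)^((c i.succ).1) :=
      (ENNReal.ofReal_eq_ofReal_iff (by positivity) (by positivity)).mp h
    have hr2 : (2:ℝ)^((c i.castSucc).1) = (2:ℝ)^((c i.succ).1 + 2) := by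
      rw [zpow_add₀ (two_ne_zero)]
      rw [hr]; ring
    have := zpow_right_injective₀ (by norm_num : (0:ℝ) < 2) (by norm_num) hr2
    omega
  -- Step 2: explicit scales
  have ha : ∀ i : Fin (2*k+1), (c i).1 = n - 2 * (i : ℤ) := by
    intro ⟨m, hm⟩
    induction m with
    | zero => simp [show (⟨0, hm⟩ : Fin (2*k+1)) = 0 from rfl, h0]
    | succ m ih =>
      have hm' : m < 2*k := by omega
      have hs := hstep ⟨m, hm'⟩
      have e1 : (Fin.succ ⟨m, hm'⟩ : Fin (2*k+1)) = ⟨m+1, hm⟩ := rfl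
      have e2 : (Fin.castSucc ⟨m, hm'⟩ : Fin (2*k+1)) = ⟨m, by omega⟩ := rfl
      rw [e1, e2] at hs
      rw [hs, ih (by omega)]
      push_cast
      ring
  set J := jp n p with hJ
  set r : ℕ → ℝ := fun i => (2:ℝ)^(n - 2*(i:ℤ)) with hr
  have rpos : ∀ i, 0 < r i := fun i => by positivity
  have ranti : ∀ i j : ℕ, i ≤ j → r j ≤ r i := fun i j hij =>
    zpow_le_zpow_right₀ one_le_two (by omega)
  have rquarter : ∀ i : ℕ, r (i+1) = r i / 4 := by
    intro i
    show (2:ℝ)^(n - 2*((i:ℤ)+1)) = (2:ℝ)^(n - 2*(i:ℤ)) / 4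
    rw [show n - 2*((i:ℤ)+1) = (n - 2*(i:ℤ)) - 2 by ring, zpow_sub₀ (two_ne_zero)]
    norm_num
  -- Step 3: the offset identity and explicit description of the right halves
  have hb : ∀ i : Fin (2*k+1), (2:ℝ)^((c i).1) * ((c i).2 : ℝ) = J - (2:ℝ)^((c i).1) / 3 :=
    fun i => jp_offset (by rw [ha i]; omega) (hjp i)
  have hpow : ∀ i : Fin (2*k+1), (2:ℝ)^((c i).1) = r (i:ℕ) := by
    intro i; rw [ha i]
  have key : ∀ i : Fin (2*k+1), dyadicI ((c i).1 - 1) (2*(c i).2 + 1)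
      = Ico (J + r (i:ℕ)/6) (J + 2 * r (i:ℕ)/3) := by
    intro i
    have hbi := hb i
    have he : (2:ℝ)^((c i).1 - 1) = (2:ℝ)^((c i).1) / 2 := by
      rw [zpow_sub₀ (two_ne_zero), zpow_one]
    have e1 : (2:ℝ)^((c i).1)/2 * (2*((c i).2:ℝ)+1) = J + r (i:ℕ)/6 := by
      rw [← hpow i]; linear_combination hbi
    have e2 : (2:ℝ)^((c i).1)/2 * (2*((c i).2:ℝ)+1+1) = J + 2 * r (i:ℕ)/3 := by
      rw [← hpow i]; linear_combination hbi
    rw [dyadicI, he]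
    push_cast
    rw [e1, e2]
  have krep : rep (c (Fin.last (2*k))).1 (c (Fin.last (2*k))).2 = J + 2 * r (2*k) / 3 := by
    have hbl := hb (Fin.last (2*k))
    have hpl := hpow (Fin.last (2*k))
    rw [Fin.val_last] at hpl
    rw [hpl] at hbl
    simp only [rep]
    rw [hpl]
    push_cast
    linear_combination hbl
  have hcast : ∀ i : Fin (2*k), ((i.castSucc : Fin (2*k+1)) : ℕ) = (i : ℕ) :=
    fun i => rfl
  refine ⟨?_, ?_, ?_⟩
  · -- pairwise disjointness
    have main : ∀ i j : Fin (2*k), (i:ℕ) < (j:ℕ) →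
        Disjoint (dyadicI ((c i.castSucc).1 - 1) (2 * (c i.castSucc).2 + 1))
                 (dyadicI ((c j.castSucc).1 - 1) (2 * (c j.castSucc).2 + 1)) := by
      intro i j hij
      rw [key, key, hcast, hcast, Ico_disjoint_Ico]
      have h1 : r (j:ℕ) ≤ r ((i:ℕ)+1) := ranti _ _ (by omega)
      rw [rquarter] at h1
      calc min (J + 2 * r (i:ℕ)/3) (J + 2 * r (j:ℕ)/3) ≤ J + 2 * r (j:ℕ)/3 :=
            min_le_right _ _
        _ ≤ J + r (i:ℕ)/6 := by linarith
        _ ≤ max (J + r (i:ℕ)/6) (J + r (j:ℕ)/6) := le_max_left _ _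
    intro i j hij
    rcases Nat.lt_or_ge (i:ℕ) (j:ℕ) with h | h
    · exact main i j h
    · have h' : (j:ℕ) < (i:ℕ) := by
        rcases Nat.lt_or_ge (j:ℕ) (i:ℕ) with h' | h'
        · exact h'
        · exact absurd (Fin.ext (by omega)) hij
      exact (main j i h').symm
  · -- disjointness from the central piece
    intro i
    rw [key, hcast, krep, Ico_disjoint_Ico]
    have h1 : r (2*k) ≤ r ((i:ℕ)+1) := ranti _ _ (by omega)
    rw [rquarter] at h1
    calc min (J + 2 * r (2*k)/3) (J + 2 * r (i:ℕ)/3) ≤ J + 2 * r (2*k)/3 :=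
          min_le_left _ _
      _ ≤ J + r (i:ℕ)/6 := by linarith
      _ ≤ max J (J + r (i:ℕ)/6) := le_max_right _ _
  · -- the union
    set g : ℕ → ℝ := fun j => J + 2 * r (2*k - j) / 3 with hg
    have hgmono : ∀ j, g j ≤ g (j+1) := by
      intro j
      have : r (2*k - j) ≤ r (2*k - (j+1)) := ranti _ _ (by omega)
      simp only [hg]
      linarith
    have hcJ : J ≤ g 0 := by
      have := rpos (2*k - 0)
      simp only [hg]
      linarith
    have hpiece : ∀ i : Fin (2*k),
        dyadicI ((c i.castSucc).1 - 1) (2 * (c i.castSucc).2 + 1)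
          = Ico (g ((i.rev : ℕ))) (g ((i.rev : ℕ)+1)) := by
      intro i
      rw [key, hcast]
      have hrev : (i.rev : ℕ) = 2*k - ((i:ℕ)+1) := Fin.val_rev i
      have e1 : 2*k - (i.rev : ℕ) = (i:ℕ) + 1 := by omega
      have e2 : 2*k - ((i.rev : ℕ)+1) = (i:ℕ) := by omega
      simp only [hg, e1, e2]
      rw [rquarter]
      congr 1
      ring
    have hunion : (⋃ i : Fin (2*k), dyadicI ((c i.castSucc).1 - 1) (2 * (c i.castSucc).2 + 1))
        = ⋃ j < 2*k, Ico (g j) (g (j+1)) := by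
      have e1 : (⋃ i : Fin (2*k), dyadicI ((c i.castSucc).1 - 1) (2 * (c i.castSucc).2 + 1))
          = ⋃ i : Fin (2*k), Ico (g ((i.rev : ℕ))) (g ((i.rev : ℕ)+1)) :=
        iUnion_congr hpiece
      rw [e1, Fin.rev_surjective.iUnion_comp (fun i : Fin (2*k) => Ico (g (i:ℕ)) (g ((i:ℕ)+1)))]
      ext x
      simp only [mem_iUnion]
      constructor
      · rintro ⟨i, hi⟩; exact ⟨(i:ℕ), i.isLt, hi⟩
      · rintro ⟨j, hj, hx⟩; exact ⟨⟨j, hj⟩, hx⟩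
    have hlastrep : rep n p = g (2*k) := by
      have : g (2*k) = J + 2 * r 0 / 3 := by simp [hg]
      rw [this]
      have hr0 : r 0 = (2:ℝ)^n := by
        show (2:ℝ)^(n - 2*((0:ℕ):ℤ)) = (2:ℝ)^n
        norm_num
      simp only [rep, hr0]
      rw [hJ]
      simp only [jp]
      push_cast
      ring
    rw [hunion, krep, hlastrep]
    exact union_chain g J hgmono hcJ (2*k)
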